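/- Let G be a regular subgroup of S_n admitting a coprime cyclic decomposition G = AB, where A and B are cyclic subgroups of coprime orders, and let σ : G → C_{S_n}(G) be the standard anti-isomorphism (with respect to some i₀) with B₁ = σ(B). Then K = ⟨A, B₁⟩ is a cyclic subgroup of S_n of order n acting regularly on {1,...,n}. -/

import Mathlib

/-- If `G` is a regular subgroup of `S_n` with a coprime cyclic
decomposition `G = AB`, and `σ : G → C_{S_n}(G)` is the standard anti-isomorphism with
`B₁ = σ(B)`, then `K = ⟨A, B₁⟩` is a cyclic subgroup of `S_n` of order `n` acting
regularly on the points. -/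
theorem coprime_cyclic_decomposition_gives_cyclic_regular_subgroup
    {n : ℕ} (G : Subgroup (Equiv.Perm (Fin n)))
    (hcard : Nat.card G = n)
    (htrans : ∀ i j : Fin n, ∃ g ∈ G, g i = j)
    (A B : Subgroup (Equiv.Perm (Fin n))) (hA : A ≤ G) (hB : B ≤ G)
    (hAcyc : IsCyclic A) (hBcyc : IsCyclic B)
    (hcop : Nat.Coprime (Nat.card A) (Nat.card B))
    (hdec : ∀ g ∈ G, ∃ a ∈ A, ∃ b ∈ B, g = a * b)
    (i₀ : Fin n)
    (σ : G → Equiv.Perm (Fin n))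
    (hσ : ∀ (h : G) (i : Fin n), ∀ g : G, (g : Equiv.Perm (Fin n)) i₀ = i →
      σ h i = (g : Equiv.Perm (Fin n)) ((h : Equiv.Perm (Fin n)) i₀))
    (hσanti : ∀ g h : G, σ (g * h) = σ h * σ g)
    (hσbij : Function.Injective σ ∧
      Set.range σ = (Subgroup.centralizer (G : Set (Equiv.Perm (Fin n))) :
        Set (Equiv.Perm (Fin n)))) :
    ∀ K : Subgroup (Equiv.Perm (Fin n)),
      K = Subgroup.closure ((A : Set (Equiv.Perm (Fin n))) ∪
            (σ '' {g : G | (g : Equiv.Perm (Fin n)) ∈ B})) →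
      (IsCyclic K ∧
        Nat.card K = n ∧
        ∀ i j : Fin n, ∃! k : K, (k : Equiv.Perm (Fin n)) i = j) := by
  obtain ⟨hσinj, hσrange⟩ := hσbij
  have hσ1 : σ 1 = 1 := by
    have h1 := hσanti 1 1
    rw [mul_one] at h1
    exact (right_eq_mul.mp h1)
  -- the monoid hom x ↦ σ x⁻¹
  set φ : G →* Equiv.Perm (Fin n) :=
    MonoidHom.mk' (fun x => σ x⁻¹) (by
      intro x y
      simp only [mul_inv_rev]
      exact hσanti _ _) with hφdef
  have hφ : ∀ x : G, φ x = σ x⁻¹ := fun x => rfl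
  have hφinj : Function.Injective φ := fun x y h => inv_injective (hσinj h)
  have hφcent : ∀ x : G, φ x ∈ Subgroup.centralizer (G : Set (Equiv.Perm (Fin n))) := by
    intro x
    have : φ x ∈ Set.range σ := ⟨x⁻¹, rfl⟩
    rw [hσrange] at this
    exact this
  have hcomm : ∀ p ∈ G, ∀ x : G, p * φ x = φ x * p := by
    intro p hp x
    exact Subgroup.mem_centralizer_iff.mp (hφcent x) p hp
  have hfix : ∀ h : G, σ h i₀ = (h : Equiv.Perm (Fin n)) i₀ := by
    intro h
    have := hσ h i₀ 1 (by simp)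
    simpa using this
  -- trivial intersection of A and B
  have htriv : ∀ p : Equiv.Perm (Fin n), p ∈ A → p ∈ B → p = 1 := by
    intro p hpA hpB
    have h1 : orderOf p ∣ Nat.card A := A.orderOf_dvd_natCard hpA
    have h2 : orderOf p ∣ Nat.card B := B.orderOf_dvd_natCard hpB
    have : orderOf p ∣ 1 := hcop ▸ Nat.dvd_gcd h1 h2
    exact orderOf_eq_one_iff.mp (Nat.dvd_one.mp this)
  -- regularity of G : the evaluation map at i₀ is bijective
  have hGsurj : Function.Surjective (fun g : G => (g : Equiv.Perm (Fin n)) i₀) := by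
    intro j
    obtain ⟨g, hg, hgj⟩ := htrans i₀ j
    exact ⟨⟨g, hg⟩, hgj⟩
  have hGbij : Function.Bijective (fun g : G => (g : Equiv.Perm (Fin n)) i₀) :=
    (Nat.bijective_iff_surjective_and_card _).mpr ⟨hGsurj, by simp [hcard]⟩
  have hGone : ∀ g : G, (g : Equiv.Perm (Fin n)) i₀ = i₀ → g = 1 := by
    intro g hg
    exact hGbij.1 (show (g : Equiv.Perm (Fin n)) i₀ = ((1 : G) : Equiv.Perm (Fin n)) i₀ by
      simpa using hg)
  -- |A| * |B| = n
  have hABcard : Nat.card A * Nat.card B = n := by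
    have hf : Function.Bijective (fun p : A × B =>
        (⟨(p.1 : Equiv.Perm (Fin n)) * p.2, mul_mem (hA p.1.2) (hB p.2.2)⟩ : G)) := by
      constructor
      · rintro ⟨a, b⟩ ⟨a', b'⟩ h
        have h' : (a : Equiv.Perm (Fin n)) * b = (a' : Equiv.Perm (Fin n)) * b' :=
          congrArg Subtype.val h
        have ha' : (a : Equiv.Perm (Fin n)) = a' * b' * (b : Equiv.Perm (Fin n))⁻¹ :=
          eq_mul_inv_iff_mul_eq.mpr h'
        have key : (a' : Equiv.Perm (Fin n))⁻¹ * a = (b' : Equiv.Perm (Fin n)) * (b : Equiv.Perm (Fin n))⁻¹ := by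
          rw [ha']; group
        have hmem1 : (a' : Equiv.Perm (Fin n))⁻¹ * a ∈ A := A.mul_mem (A.inv_mem a'.2) a.2
        have hmem2 : (a' : Equiv.Perm (Fin n))⁻¹ * a ∈ B := by
          rw [key]; exact B.mul_mem b'.2 (B.inv_mem b.2)
        have hone := htriv _ hmem1 hmem2
        have haa : (a : Equiv.Perm (Fin n)) = a' := by
          have := inv_mul_eq_one.mp hone; exact this.symm
        have hbb : (b : Equiv.Perm (Fin n)) = b' := by
          have h2 : (b' : Equiv.Perm (Fin n)) * (b : Equiv.Perm (Fin n))⁻¹ = 1 := key ▸ hone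
          have := mul_inv_eq_one.mp h2; exact this.symm
        exact Prod.ext (Subtype.ext haa) (Subtype.ext hbb)
      · intro g
        obtain ⟨a, ha, b, hb, hab⟩ := hdec g g.2
        exact ⟨(⟨a, ha⟩, ⟨b, hb⟩), Subtype.ext hab.symm⟩
    have := Nat.card_eq_of_bijective _ hf
    simpa [Nat.card_prod, hcard] using this
  intro K hK
  have hAK : ∀ p ∈ A, p ∈ K := fun p hp => hK ▸ Subgroup.subset_closure (Or.inl hp)
  have hBK : ∀ x : G, (x : Equiv.Perm (Fin n)) ∈ B → σ x ∈ K := fun x hx =>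
    hK ▸ Subgroup.subset_closure (Or.inr ⟨x, hx, rfl⟩)
  -- every element of K has the form a * φ x with a ∈ A, ↑x ∈ B
  have hform : ∀ p ∈ K, ∃ a ∈ A, ∃ x : G, (x : Equiv.Perm (Fin n)) ∈ B ∧ p = a * φ x := by
    intro p hp
    rw [hK] at hp
    refine Subgroup.closure_induction ?_ ?_ ?_ ?_ hp
    · rintro q (hq | ⟨x, hx, rfl⟩)
      · exact ⟨q, hq, 1, by simpa using B.one_mem, by simp⟩
      · refine ⟨1, A.one_mem, x⁻¹, ?_, by simp [hφ]⟩
        simpa using B.inv_mem hx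
    · exact ⟨1, A.one_mem, 1, by simpa using B.one_mem, by simp⟩
    · rintro q r _ _ ⟨a, ha, x, hx, rfl⟩ ⟨a', ha', x', hx', rfl⟩
      refine ⟨a * a', A.mul_mem ha ha', x * x', B.mul_mem hx hx', ?_⟩
      have hc : a' * φ x = φ x * a' := hcomm a' (hA ha') x
      rw [map_mul]
      calc a * φ x * (a' * φ x') = a * (φ x * a') * φ x' := by group
        _ = a * (a' * φ x) * φ x' := by rw [hc]
        _ = a * a' * (φ x * φ x') := by group
    · rintro q _ ⟨a, ha, x, hx, rfl⟩
      refine ⟨a⁻¹, A.inv_mem ha, x⁻¹, by simpa using B.inv_mem hx, ?_⟩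
      have hc : a⁻¹ * φ x⁻¹ = φ x⁻¹ * a⁻¹ := hcomm a⁻¹ (G.inv_mem (hA ha)) x⁻¹
      rw [mul_inv_rev, ← map_inv, hc]
  -- evaluation at i₀ on K is bijective
  have hKsurj : Function.Surjective (fun k : K => (k : Equiv.Perm (Fin n)) i₀) := by
    intro j
    obtain ⟨g, hg, hgj⟩ := htrans i₀ j
    obtain ⟨a, ha, b, hb, hab⟩ := hdec g hg
    refine ⟨⟨a * σ ⟨b, hB hb⟩, K.mul_mem (hAK a ha) (hBK ⟨b, hB hb⟩ hb)⟩, ?_⟩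
    show (a * σ ⟨b, hB hb⟩) i₀ = j
    rw [Equiv.Perm.mul_apply, hfix]
    rw [← hgj, hab]
    rfl
  have hKone : ∀ p ∈ K, p i₀ = i₀ → p = 1 := by
    intro p hp hpfix
    obtain ⟨a, ha, x, hx, rfl⟩ := hform p hp
    have hval : (a * φ x) i₀ = ((⟨a, hA ha⟩ * x⁻¹ : G) : Equiv.Perm (Fin n)) i₀ := by
      simp [hφ, Equiv.Perm.mul_apply, hfix]
    have hone : (⟨a, hA ha⟩ * x⁻¹ : G) = 1 := hGone _ (by rw [← hval]; exact hpfix)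
    have hax : (⟨a, hA ha⟩ : G) = x := by
      have := mul_inv_eq_one.mp hone
      exact this
    have haB : a ∈ B := by
      have : (x : Equiv.Perm (Fin n)) = a := by rw [← hax]
      rwa [this] at hx
    have ha1 : a = 1 := htriv a ha haB
    have hx1 : x = 1 := by
      apply_fun (fun g : G => (g : Equiv.Perm (Fin n))) at hax
      · have : (x : Equiv.Perm (Fin n)) = 1 := by rw [← hax]; exact ha1
        exact Subtype.ext this
    rw [ha1, hx1, map_one, mul_one]
  have hKinj : Function.Injective (fun k : K => (k : Equiv.Perm (Fin n)) i₀) := by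
    intro k k' h
    have h' : (k : Equiv.Perm (Fin n)) i₀ = (k' : Equiv.Perm (Fin n)) i₀ := h
    have hm : ((k'⁻¹ * k : K) : Equiv.Perm (Fin n)) i₀ = i₀ := by
      show ((k' : Equiv.Perm (Fin n))⁻¹ * k) i₀ = i₀
      rw [Equiv.Perm.mul_apply, h']
      exact Equiv.symm_apply_apply _ _
    have := hKone _ (k'⁻¹ * k : K).2 hm
    have h1 : (k'⁻¹ * k : K) = 1 := Subtype.ext this
    have := inv_mul_eq_one.mp h1
    exact this.symm
  have hKbij : Function.Bijective (fun k : K => (k : Equiv.Perm (Fin n)) i₀) := ⟨hKinj, hKsurj⟩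
  have hKcard : Nat.card K = n := by
    have := Nat.card_eq_of_bijective _ hKbij
    simpa using this
  refine ⟨?_, hKcard, ?_⟩
  · -- cyclic
    obtain ⟨gA, hgA⟩ := hAcyc.exists_ofOrder_eq_natCard
    obtain ⟨gB, hgB⟩ := hBcyc.exists_ofOrder_eq_natCard
    set a₀ : Equiv.Perm (Fin n) := (gA : Equiv.Perm (Fin n)) with ha₀
    set x₀ : G := ⟨(gB : Equiv.Perm (Fin n)), hB gB.2⟩ with hx₀
    have ha₀ord : orderOf a₀ = Nat.card A := by rw [Subgroup.orderOf_coe]; exact hgA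
    have hx₀ord : orderOf x₀ = Nat.card B := by
      rw [Subgroup.orderOf_mk, Subgroup.orderOf_coe]; exact hgB
    have hc₀ord : orderOf (φ x₀) = Nat.card B := by
      rw [orderOf_injective φ hφinj]; exact hx₀ord
    have hc₀K : φ x₀ ∈ K := by
      rw [hφ]
      exact hBK x₀⁻¹ (by simp [hx₀])
    have hcomm₀ : Commute a₀ (φ x₀) := hcomm a₀ (hA gA.2) x₀
    have hordmul : orderOf (a₀ * φ x₀) = n := by
      rw [hcomm₀.orderOf_mul_eq_mul_orderOf_of_coprime (by rw [ha₀ord, hc₀ord]; exact hcop),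
        ha₀ord, hc₀ord, hABcard]
    refine isCyclic_iff_exists_orderOf_eq_natCard.mpr
      ⟨⟨a₀ * φ x₀, K.mul_mem (hAK a₀ gA.2) hc₀K⟩, ?_⟩
    rw [Subgroup.orderOf_mk, hordmul, hKcard]
  · -- regularity
    intro i j
    obtain ⟨k₁, hk₁0⟩ := hKsurj i
    obtain ⟨k₂, hk₂0⟩ := hKsurj j
    have hk₁ : (k₁ : Equiv.Perm (Fin n)) i₀ = i := hk₁0
    have hk₂ : (k₂ : Equiv.Perm (Fin n)) i₀ = j := hk₂0
    refine ⟨k₂ * k₁⁻¹, ?_, ?_⟩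
    · show ((k₂ : Equiv.Perm (Fin n)) * (k₁ : Equiv.Perm (Fin n))⁻¹) i = j
      rw [Equiv.Perm.mul_apply, ← hk₁, Equiv.Perm.coe_inv, Equiv.symm_apply_apply, hk₂]
    · intro k hk
      have : (fun k : K => (k : Equiv.Perm (Fin n)) i₀) (k * k₁) =
          (fun k : K => (k : Equiv.Perm (Fin n)) i₀) (k₂ * k₁⁻¹ * k₁) := by
        show ((k : Equiv.Perm (Fin n)) * k₁) i₀ = ((k₂ : Equiv.Perm (Fin n)) * (k₁ : Equiv.Perm (Fin n))⁻¹ * k₁) i₀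
        rw [Equiv.Perm.mul_apply, hk₁, hk, Equiv.Perm.mul_apply, Equiv.Perm.mul_apply,
          Equiv.Perm.coe_inv, Equiv.symm_apply_apply, hk₂]
      exact mul_right_cancel (hKinj this)
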